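/- arXiv:1304.4336 — 2 statements merged into one kernel-verified Lean document; each statement's English description precedes it below -/
import Mathlib

section
/- Let g : ℝ → ℝ be continuous, 1-periodic with mean zero, and K ∈ C^{q+1}([0,1]) with K^{(r)}(0) = K^{(r)}(1) = 0 for r = 0,…,q. Then |∫₀¹ K(t) g(t/ε) dt| ≤ ε^{q+1} · ‖g^{[q+1]}‖_∞ · ∫₀¹ |K^{(q+1)}(t)| dt, where g^{[r]} denotes the r-fold mean-zero antiderivative of g. -/
theorem higher_order_averaging_estimate (q : ℕ)
    (g : ℝ → ℝ) (hg : Continuous g)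
    (hper : Function.Periodic g 1) (hmean : ∫ τ in (0:ℝ)..1, g τ = 0)
    (G : ℕ → ℝ → ℝ) (hG0 : G 0 = g)
    (hGsucc : ∀ r s, G (r + 1) s =
      (∫ τ in (0:ℝ)..s, G r τ) - ∫ σ in (0:ℝ)..1, ∫ τ in (0:ℝ)..σ, G r τ)
    (K : ℝ → ℝ) (hK : ContDiff ℝ (q + 1) K)
    (hK0 : ∀ r ≤ q, iteratedDeriv r K 0 = 0)
    (hK1 : ∀ r ≤ q, iteratedDeriv r K 1 = 0)
    (M : ℝ) (hM : ∀ s, |G (q + 1) s| ≤ M)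
    (ε : ℝ) (hε : 0 < ε) :
    |∫ t in (0:ℝ)..1, K t * g (t / ε)| ≤
      ε ^ (q + 1) * M * ∫ t in (0:ℝ)..1, |iteratedDeriv (q + 1) K t| := by
  have hεne : ε ≠ 0 := ne_of_gt hε
  -- continuity of G r
  have contG : ∀ r, Continuous (G r) := by
    intro r
    induction r with
    | zero => simpa [hG0] using hg
    | succ r ih =>
      have : G (r+1) = fun s => (∫ τ in (0:ℝ)..s, G r τ) -
          ∫ σ in (0:ℝ)..1, ∫ τ in (0:ℝ)..σ, G r τ := funext (hGsucc r)
      rw [this]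
      exact (intervalIntegral.continuous_primitive
        (fun a b => ih.intervalIntegrable a b) 0).sub continuous_const
  -- derivative of G (r+1)
  have derivG : ∀ r s, HasDerivAt (G (r+1)) (G r s) s := by
    intro r s
    have h1 : HasDerivAt (fun s => ∫ τ in (0:ℝ)..s, G r τ) (G r s) s :=
      intervalIntegral.integral_hasDerivAt_right
        ((contG r).intervalIntegrable 0 s)
        ((contG r).stronglyMeasurableAtFilter _ _) (contG r).continuousAt
    have h2 := h1.sub_const (∫ σ in (0:ℝ)..1, ∫ τ in (0:ℝ)..σ, G r τ)
    have : G (r+1) = fun s => (∫ τ in (0:ℝ)..s, G r τ) -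
        ∫ σ in (0:ℝ)..1, ∫ τ in (0:ℝ)..σ, G r τ := funext (hGsucc r)
    rw [this]; exact h2
  -- continuity of iterated derivatives
  have contK : ∀ r : ℕ, r ≤ q + 1 → Continuous (iteratedDeriv r K) := by
    intro r hr
    exact hK.continuous_iteratedDeriv r (by exact_mod_cast hr)
  -- deriv of iteratedDeriv r K
  have derivK : ∀ r : ℕ, r ≤ q → ∀ t : ℝ,
      HasDerivAt (iteratedDeriv r K) (iteratedDeriv (r+1) K t) t := by
    intro r hr t
    have hdiff : Differentiable ℝ (iteratedDeriv r K) :=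
      hK.differentiable_iteratedDeriv r (by exact_mod_cast Nat.lt_succ_of_le hr)
    have := (hdiff t).hasDerivAt
    rwa [iteratedDeriv_succ]
  set A : ℕ → ℝ := fun r => ∫ t in (0:ℝ)..1, iteratedDeriv r K t * (ε ^ r * G r (t / ε))
    with hA
  -- integration by parts step
  have step : ∀ r : ℕ, r ≤ q → A r = - A (r+1) := by
    intro r hr
    set u : ℝ → ℝ := fun t => ε ^ (r+1) * G (r+1) (t / ε) with hu
    set u' : ℝ → ℝ := fun t => ε ^ r * G r (t / ε) with hu'
    have hud : ∀ t : ℝ, HasDerivAt u (u' t) t := by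
      intro t
      have hd : HasDerivAt (fun t : ℝ => t / ε) (1 / ε) t := by
        simpa using (hasDerivAt_id t).div_const ε
      have := ((derivG r (t / ε)).comp t hd).const_mul (ε ^ (r+1))
      convert this using 1
      show ε ^ r * G r (t / ε) = ε ^ (r+1) * (G r (t / ε) * (1 / ε))
      rw [show ε ^ (r+1) * (G r (t / ε) * (1 / ε)) = ε ^ r * G r (t / ε) * (ε * (1 / ε)) by ring,
        mul_one_div_cancel hεne, mul_one]
      all_goals rfl
    have hcontu' : Continuous u' := by
      exact continuous_const.mul ((contG r).comp (continuous_id.div_const ε))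
    have hcontv' : Continuous (iteratedDeriv (r+1) K) := contK (r+1) (by omega)
    have hibp := intervalIntegral.integral_deriv_mul_eq_sub
      (u := u) (v := iteratedDeriv r K) (u' := u') (v' := iteratedDeriv (r+1) K)
      (a := 0) (b := 1)
      (fun x _ => hud x) (fun x _ => derivK r hr x)
      (hcontu'.intervalIntegrable 0 1) (hcontv'.intervalIntegrable 0 1)
    rw [hK0 r hr, hK1 r hr] at hibp
    simp only [mul_zero, zero_mul, sub_zero, sub_self] at hibp
    have hcontu : Continuous u :=
      continuous_const.mul ((contG (r+1)).comp (continuous_id.div_const ε))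
    rw [intervalIntegral.integral_add (f := fun x => u' x * iteratedDeriv r K x)
      (g := fun x => u x * iteratedDeriv (r+1) K x)
      ((hcontu'.mul (contK r (by omega))).intervalIntegrable 0 1)
      ((hcontu.mul hcontv').intervalIntegrable 0 1)] at hibp
    have h1 : A r = ∫ x in (0:ℝ)..1, u' x * iteratedDeriv r K x := by
      simp only [hA, hu', mul_comm]
    have h2 : A (r+1) = ∫ x in (0:ℝ)..1, u x * iteratedDeriv (r+1) K x := by
      simp only [hA, hu, mul_comm]
    rw [h1, h2]; linarith
  -- |A 0| = |A (q+1)|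
  have habs : ∀ r : ℕ, r ≤ q + 1 → |A 0| = |A r| := by
    intro r hr
    induction r with
    | zero => rfl
    | succ r ih =>
      rw [ih (by omega), step r (by omega), abs_neg]
  have hA0 : A 0 = ∫ t in (0:ℝ)..1, K t * g (t / ε) := by
    simp [hA, hG0, iteratedDeriv_zero]
  have hMnonneg : 0 ≤ M := le_trans (abs_nonneg _) (hM 0)
  rw [← hA0, habs (q+1) le_rfl]
  have hb1 : |A (q+1)| ≤
      ∫ t in (0:ℝ)..1, |iteratedDeriv (q+1) K t * (ε ^ (q+1) * G (q+1) (t / ε))| :=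
    intervalIntegral.abs_integral_le_integral_abs zero_le_one
  have hcontf : Continuous fun t =>
      iteratedDeriv (q+1) K t * (ε ^ (q+1) * G (q+1) (t / ε)) :=
    (contK (q+1) le_rfl).mul
      (continuous_const.mul ((contG (q+1)).comp (continuous_id.div_const ε)))
  have hb2 : (∫ t in (0:ℝ)..1, |iteratedDeriv (q+1) K t * (ε ^ (q+1) * G (q+1) (t / ε))|)
      ≤ ∫ t in (0:ℝ)..1, ε ^ (q+1) * M * |iteratedDeriv (q+1) K t| := by
    apply intervalIntegral.integral_mono_on zero_le_one
      (hcontf.abs.intervalIntegrable 0 1)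
      ((continuous_const.mul (contK (q+1) le_rfl).abs).intervalIntegrable 0 1)
    intro x _
    rw [abs_mul, abs_mul, abs_pow, abs_of_pos hε]
    calc |iteratedDeriv (q+1) K x| * (ε ^ (q+1) * |G (q+1) (x / ε)|)
        ≤ |iteratedDeriv (q+1) K x| * (ε ^ (q+1) * M) := by
          apply mul_le_mul_of_nonneg_left _ (abs_nonneg _)
          exact mul_le_mul_of_nonneg_left (hM _) (by positivity)
      _ = ε ^ (q+1) * M * |iteratedDeriv (q+1) K x| := by ring
  calc |A (q+1)| ≤ _ := hb1
    _ ≤ ∫ t in (0:ℝ)..1, ε ^ (q+1) * M * |iteratedDeriv (q+1) K t| := hb2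
    _ = ε ^ (q+1) * M * ∫ t in (0:ℝ)..1, |iteratedDeriv (q+1) K t| := by
        rw [intervalIntegral.integral_const_mul]
end

section
/- Consider the linear system x' = (1/ε)·A·x on ℝ⁴ where A is block diagonal with rotation blocks of frequencies a and b, and suppose a = 2b (resonance). Then along any solution, ξ₃ = x₁x₃² + 2x₂x₃x₄ − x₁x₄² is constant in time. -/
theorem resonant_invariant_conserved (ε b : ℝ) (hε : 0 < ε)
    (a : ℝ) (hab : a = 2 * b)
    (x₁ x₂ x₃ x₄ : ℝ → ℝ)
    (h1 : ∀ t, HasDerivAt x₁ ((1 / ε) * (a * x₂ t)) t)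
    (h2 : ∀ t, HasDerivAt x₂ ((1 / ε) * (-a * x₁ t)) t)
    (h3 : ∀ t, HasDerivAt x₃ ((1 / ε) * (b * x₄ t)) t)
    (h4 : ∀ t, HasDerivAt x₄ ((1 / ε) * (-b * x₃ t)) t) :
    ∀ t, x₁ t * x₃ t ^ 2 + 2 * x₂ t * x₃ t * x₄ t - x₁ t * x₄ t ^ 2 =
         x₁ 0 * x₃ 0 ^ 2 + 2 * x₂ 0 * x₃ 0 * x₄ 0 - x₁ 0 * x₄ 0 ^ 2 := by
  subst hab
  set F : ℝ → ℝ := fun t => x₁ t * x₃ t ^ 2 + 2 * x₂ t * x₃ t * x₄ t - x₁ t * x₄ t ^ 2 with hF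
  have hderiv : ∀ t, HasDerivAt F 0 t := by
    intro t
    have h := (((h1 t).mul ((h3 t).pow 2)).add
        ((((h2 t).const_mul 2).mul (h3 t)).mul (h4 t))).sub ((h1 t).mul ((h4 t).pow 2))
    exact h.congr_deriv (g' := 0) (by simp only [Pi.mul_apply, Pi.pow_apply]; norm_num; ring)
  intro t
  have : ∀ s, F s = F 0 := by
    intro s
    have := is_const_of_deriv_eq_zero (f := F)
      (fun u => (hderiv u).differentiableAt) (fun u => (hderiv u).deriv) s 0
    exact this
  exact this t
end
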